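/- The marked order polytope O_{P,A}(λ) is a compact convex polytope in ℝ^P (a bounded intersection of finitely many closed affine halfspaces), and its dimension (the dimension of its affine hull) equals the cardinality of the set P ∖ {p ∈ P : there exist a, b ∈ A with a ≤ p ≤ b in P and λ(a) = λ(b)}. -/

import Mathlib

/-- The marked order polytope `O_{P,A}(λ)`: order preserving maps `P → ℝ`
agreeing with `lam` on the marked subset `A`. -/
def markedOrderPolytope (P : Type*) [PartialOrder P] (A : Set P) (lam : P → ℝ) :
    Set (P → ℝ) :=
  {φ | Monotone φ ∧ ∀ a ∈ A, φ a = lam a}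

open Classical in
noncomputable def mopUp {P : Type*} [PartialOrder P] (A : Set P) (lam : P → ℝ) (p : P) : ℝ :=
  sSup (lam '' (A ∩ Set.Iic p))

open Classical in
noncomputable def mopDown {P : Type*} [PartialOrder P] (A : Set P) (lam : P → ℝ) (p : P) : ℝ :=
  sInf (lam '' (A ∩ Set.Ici p))

section basic
variable {P : Type*} [Fintype P] [PartialOrder P] {A : Set P} {lam : P → ℝ}

lemma mop_ne_up (hmin : ∀ p : P, IsMin p → p ∈ A) (p : P) : (lam '' (A ∩ Set.Iic p)).Nonempty := by
  obtain ⟨m, hm, hmin'⟩ := Finite.exists_le_minimal (p := fun _ : P => True) (a := p) trivial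
  exact ⟨lam m, Set.mem_image_of_mem _ ⟨hmin m (fun b hb => hmin'.2 trivial hb), hm⟩⟩

lemma mop_ne_down (hmax : ∀ p : P, IsMax p → p ∈ A) (p : P) : (lam '' (A ∩ Set.Ici p)).Nonempty := by
  obtain ⟨m, hm, hmax'⟩ := Finite.exists_le_maximal (p := fun _ : P => True) (a := p) trivial
  exact ⟨lam m, Set.mem_image_of_mem _ ⟨hmax m (fun b hb => hmax'.2 trivial hb), hm⟩⟩

lemma mopUp_le (hmin : ∀ p : P, IsMin p → p ∈ A) {φ : P → ℝ}
    (hφ : φ ∈ markedOrderPolytope P A lam) (p : P) : mopUp A lam p ≤ φ p := by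
  refine csSup_le (mop_ne_up hmin p) ?_
  rintro x ⟨a, ⟨haA, hap⟩, rfl⟩
  rw [← hφ.2 a haA]; exact hφ.1 hap

lemma le_mopDown (hmax : ∀ p : P, IsMax p → p ∈ A) {φ : P → ℝ}
    (hφ : φ ∈ markedOrderPolytope P A lam) (p : P) : φ p ≤ mopDown A lam p := by
  refine le_csInf (mop_ne_down hmax p) ?_
  rintro x ⟨b, ⟨hbA, hpb⟩, rfl⟩
  rw [← hφ.2 b hbA]; exact hφ.1 hpb

lemma le_mopUp {a p : P} (ha : a ∈ A) (hap : a ≤ p) : lam a ≤ mopUp A lam p :=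
  le_csSup (Set.Finite.bddAbove (Set.toFinite _)) (Set.mem_image_of_mem _ ⟨ha, hap⟩)

lemma mopDown_le {b p : P} (hb : b ∈ A) (hpb : p ≤ b) : mopDown A lam p ≤ lam b :=
  csInf_le (Set.Finite.bddBelow (Set.toFinite _)) (Set.mem_image_of_mem _ ⟨hb, hpb⟩)

lemma mopUp_mono (hmin : ∀ p : P, IsMin p → p ∈ A) : Monotone (mopUp A lam) := by
  intro p q hpq
  refine csSup_le (mop_ne_up hmin p) ?_
  rintro x ⟨a, ⟨haA, hap⟩, rfl⟩
  exact le_mopUp haA (hap.trans hpq)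

lemma mopDown_mono (hmax : ∀ p : P, IsMax p → p ∈ A) : Monotone (mopDown A lam) := by
  intro p q hpq
  refine le_csInf (mop_ne_down hmax q) ?_
  rintro x ⟨b, ⟨hbA, hqb⟩, rfl⟩
  exact mopDown_le hbA (hpq.trans hqb)

lemma mopUp_le_mopDown (hmin : ∀ p : P, IsMin p → p ∈ A) (hmax : ∀ p : P, IsMax p → p ∈ A)
    (hlam : ∀ a ∈ A, ∀ b ∈ A, a ≤ b → lam a ≤ lam b) (p : P) :
    mopUp A lam p ≤ mopDown A lam p := by
  refine csSup_le (mop_ne_up hmin p) ?_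
  rintro x ⟨a, ⟨haA, hap⟩, rfl⟩
  refine le_csInf (mop_ne_down hmax p) ?_
  rintro y ⟨b, ⟨hbA, hpb⟩, rfl⟩
  exact hlam a haA b hbA (hap.trans hpb)

lemma mopUp_eq_lam (hlam : ∀ a ∈ A, ∀ b ∈ A, a ≤ b → lam a ≤ lam b) {a : P} (ha : a ∈ A) :
    mopUp A lam a = lam a := by
  refine le_antisymm (csSup_le ⟨lam a, Set.mem_image_of_mem _ ⟨ha, le_rfl⟩⟩ ?_) (le_mopUp ha le_rfl)
  rintro x ⟨a', ⟨ha'A, ha'⟩, rfl⟩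
  exact hlam a' ha'A a ha ha'

lemma mopDown_eq_lam (hlam : ∀ a ∈ A, ∀ b ∈ A, a ≤ b → lam a ≤ lam b) {a : P} (ha : a ∈ A) :
    mopDown A lam a = lam a := by
  refine le_antisymm (mopDown_le ha le_rfl)
    (le_csInf ⟨lam a, Set.mem_image_of_mem _ ⟨ha, le_rfl⟩⟩ ?_)
  rintro x ⟨b, ⟨hbA, hb⟩, rfl⟩
  exact hlam a ha b hbA hb

/-- "fixed" points: those where the value is forced. -/
def mopFixed (A : Set P) (lam : P → ℝ) : Set P :=
  {p : P | ∃ a ∈ A, ∃ b ∈ A, a ≤ p ∧ p ≤ b ∧ lam a = lam b}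

lemma fixed_down_le_up {p : P} (hp : p ∈ mopFixed A lam) :
    mopDown A lam p ≤ mopUp A lam p := by
  obtain ⟨a, haA, b, hbA, hap, hpb, hab⟩ := hp
  calc mopDown A lam p ≤ lam b := mopDown_le hbA hpb
    _ = lam a := hab.symm
    _ ≤ mopUp A lam p := le_mopUp haA hap

lemma fixed_phi_eq (hmin : ∀ p : P, IsMin p → p ∈ A) (hmax : ∀ p : P, IsMax p → p ∈ A)
    {φ : P → ℝ} (hφ : φ ∈ markedOrderPolytope P A lam) {p : P} (hp : p ∈ mopFixed A lam) :
    φ p = mopUp A lam p :=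
  le_antisymm ((le_mopDown hmax hφ p).trans (fixed_down_le_up hp)) (mopUp_le hmin hφ p)

lemma free_up_lt_down (hmin : ∀ p : P, IsMin p → p ∈ A) (hmax : ∀ p : P, IsMax p → p ∈ A)
    (hlam : ∀ a ∈ A, ∀ b ∈ A, a ≤ b → lam a ≤ lam b) {p : P} (hp : p ∉ mopFixed A lam) :
    mopUp A lam p < mopDown A lam p := by
  rcases lt_or_eq_of_le (mopUp_le_mopDown hmin hmax hlam p) with h | h
  · exact h
  · exfalso
    have h1 : mopUp A lam p ∈ lam '' (A ∩ Set.Iic p) :=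
      Set.Nonempty.csSup_mem (mop_ne_up hmin p) (Set.toFinite _)
    have h2 : mopDown A lam p ∈ lam '' (A ∩ Set.Ici p) :=
      Set.Nonempty.csInf_mem (mop_ne_down hmax p) (Set.toFinite _)
    obtain ⟨a, ⟨haA, hap⟩, ha⟩ := h1
    obtain ⟨b, ⟨hbA, hpb⟩, hb⟩ := h2
    exact hp ⟨a, haA, b, hbA, hap, hpb, by rw [ha, hb, h]⟩

end basic

noncomputable def mopH (P : Type*) [Fintype P] [PartialOrder P] (p : P) : ℝ :=
  (Set.Iic p).ncard / (Fintype.card P + 1)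

noncomputable def mopDelta {P : Type*} [PartialOrder P] (A : Set P) (lam : P → ℝ) : ℝ :=
  sInf (insert (1:ℝ) ((fun p => (mopDown A lam p - mopUp A lam p)/4) '' (mopFixed A lam)ᶜ))

open Classical in
noncomputable def mopStar {P : Type*} [Fintype P] [PartialOrder P] (A : Set P) (lam : P → ℝ)
    (p : P) : ℝ :=
  if p ∈ mopFixed A lam then mopUp A lam p
  else (mopUp A lam p + mopDown A lam p)/2 + mopDelta A lam * mopH P p

section star
variable {P : Type*} [Fintype P] [PartialOrder P] {A : Set P} {lam : P → ℝ}

lemma mopH_nonneg (p : P) : 0 ≤ mopH P p := by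
  unfold mopH; positivity

lemma mopH_le_one (p : P) : mopH P p ≤ 1 := by
  unfold mopH
  rw [div_le_one (by positivity)]
  have : (Set.Iic p).ncard ≤ Fintype.card P := by
    simpa [Set.ncard_univ, Nat.card_eq_fintype_card] using Set.ncard_le_ncard (Set.subset_univ (Set.Iic p)) (Set.toFinite _)
  exact_mod_cast this.trans (Nat.le_succ _)

lemma mopH_strictMono {p q : P} (h : p < q) : mopH P p < mopH P q := by
  unfold mopH
  have hss : Set.Iic p ⊂ Set.Iic q := by
    constructor
    · exact fun x hx => le_trans hx h.le
    · intro hsub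
      exact absurd (hsub (Set.mem_Iic.2 le_rfl)) (by simpa using h.not_ge)
  have := Set.ncard_lt_ncard hss (Set.toFinite _)
  have hpos : (0:ℝ) < Fintype.card P + 1 := by positivity
  exact div_lt_div_of_pos_right (by exact_mod_cast this) hpos

lemma mopDelta_pos (hmin : ∀ p : P, IsMin p → p ∈ A) (hmax : ∀ p : P, IsMax p → p ∈ A)
    (hlam : ∀ a ∈ A, ∀ b ∈ A, a ≤ b → lam a ≤ lam b) : 0 < mopDelta A lam := by
  have hne : (insert (1:ℝ)
      ((fun p => (mopDown A lam p - mopUp A lam p)/4) '' (mopFixed A lam)ᶜ)).Nonempty :=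
    ⟨1, Set.mem_insert _ _⟩
  have hmem := Set.Nonempty.csInf_mem hne (Set.Finite.insert _ ((Set.toFinite _).image _))
  rw [mopDelta]
  rcases hmem with h1 | ⟨p, hp, heq⟩
  · rw [h1]; norm_num
  · have := free_up_lt_down hmin hmax hlam hp
    rw [← heq]; dsimp only; linarith

lemma mopDelta_le_gap {p : P} (hp : p ∉ mopFixed A lam) :
    mopDelta A lam ≤ (mopDown A lam p - mopUp A lam p)/4 :=
  csInf_le ((Set.Finite.insert _ ((Set.toFinite _).image _)).bddBelow)
    (Set.mem_insert_of_mem _ ⟨p, hp, rfl⟩)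

lemma mopStar_bounds (hmin : ∀ p : P, IsMin p → p ∈ A) (hmax : ∀ p : P, IsMax p → p ∈ A)
    (hlam : ∀ a ∈ A, ∀ b ∈ A, a ≤ b → lam a ≤ lam b) {p : P} (hp : p ∉ mopFixed A lam) :
    mopUp A lam p < mopStar A lam p ∧ mopStar A lam p < mopDown A lam p := by
  have hgap := free_up_lt_down hmin hmax hlam hp
  have hδ := mopDelta_pos hmin hmax hlam
  have hδg := mopDelta_le_gap hp
  have h0 := mopH_nonneg p
  have h1 := mopH_le_one p
  have hδh : mopDelta A lam * mopH P p ≤ (mopDown A lam p - mopUp A lam p)/4 := by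
    calc mopDelta A lam * mopH P p ≤ mopDelta A lam * 1 := by
          exact mul_le_mul_of_nonneg_left h1 hδ.le
      _ ≤ (mopDown A lam p - mopUp A lam p)/4 := by rw [mul_one]; exact hδg
  have hδh0 : 0 ≤ mopDelta A lam * mopH P p := mul_nonneg hδ.le h0
  rw [mopStar, if_neg hp]
  constructor <;> linarith

lemma mopStar_strictMono (hmin : ∀ p : P, IsMin p → p ∈ A) (hmax : ∀ p : P, IsMax p → p ∈ A)
    (hlam : ∀ a ∈ A, ∀ b ∈ A, a ≤ b → lam a ≤ lam b) {p q : P} (h : p < q)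
    (hfree : p ∉ mopFixed A lam ∨ q ∉ mopFixed A lam) :
    mopStar A lam p < mopStar A lam q := by
  by_cases hp : p ∈ mopFixed A lam <;> by_cases hq : q ∈ mopFixed A lam
  · tauto
  · calc mopStar A lam p = mopUp A lam p := by rw [mopStar, if_pos hp]
      _ ≤ mopUp A lam q := mopUp_mono hmin h.le
      _ < mopStar A lam q := (mopStar_bounds hmin hmax hlam hq).1
  · calc mopStar A lam p < mopDown A lam p := (mopStar_bounds hmin hmax hlam hp).2
      _ ≤ mopDown A lam q := mopDown_mono hmax h.le
      _ ≤ mopUp A lam q := fixed_down_le_up hq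
      _ = mopStar A lam q := by rw [mopStar, if_pos hq]
  · rw [mopStar, if_neg hp, mopStar, if_neg hq]
    have h1 : mopUp A lam p ≤ mopUp A lam q := mopUp_mono hmin h.le
    have h2 : mopDown A lam p ≤ mopDown A lam q := mopDown_mono hmax h.le
    have h3 := mopH_strictMono (P := P) h
    have hδ := mopDelta_pos hmin hmax hlam
    nlinarith

lemma mopStar_mono (hmin : ∀ p : P, IsMin p → p ∈ A) (hmax : ∀ p : P, IsMax p → p ∈ A)
    (hlam : ∀ a ∈ A, ∀ b ∈ A, a ≤ b → lam a ≤ lam b) : Monotone (mopStar A lam) := by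
  intro p q hpq
  rcases eq_or_lt_of_le hpq with rfl | h
  · exact le_rfl
  by_cases hp : p ∈ mopFixed A lam <;> by_cases hq : q ∈ mopFixed A lam
  · rw [mopStar, if_pos hp, mopStar, if_pos hq]; exact mopUp_mono hmin h.le
  all_goals exact (mopStar_strictMono hmin hmax hlam h (by tauto)).le

omit [Fintype P] in
lemma mem_fixed_of_mem_A {a : P} (ha : a ∈ A) : a ∈ mopFixed A lam :=
  ⟨a, ha, a, ha, le_rfl, le_rfl, rfl⟩

lemma mopStar_mem (hmin : ∀ p : P, IsMin p → p ∈ A) (hmax : ∀ p : P, IsMax p → p ∈ A)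
    (hlam : ∀ a ∈ A, ∀ b ∈ A, a ≤ b → lam a ≤ lam b) :
    mopStar A lam ∈ markedOrderPolytope P A lam := by
  refine ⟨mopStar_mono hmin hmax hlam, fun a ha => ?_⟩
  rw [mopStar, if_pos (mem_fixed_of_mem_A ha)]
  exact mopUp_eq_lam hlam ha

end star

section perturb
variable {P : Type*} [Fintype P] [PartialOrder P] {A : Set P} {lam : P → ℝ}

omit [Fintype P] in
lemma not_mem_A_of_free {p : P} (hp : p ∉ mopFixed A lam) : p ∉ A :=
  fun h => hp (mem_fixed_of_mem_A h)

open Classical in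
lemma mopStar_perturb (hmin : ∀ p : P, IsMin p → p ∈ A) (hmax : ∀ p : P, IsMax p → p ∈ A)
    (hlam : ∀ a ∈ A, ∀ b ∈ A, a ≤ b → lam a ≤ lam b) {p : P} (hp : p ∉ mopFixed A lam) :
    ∃ ε : ℝ, 0 < ε ∧
      mopStar A lam + ε • (Pi.single p (1:ℝ) : P → ℝ) ∈ markedOrderPolytope P A lam := by
  classical
  set T : Set ℝ :=
    insert (1:ℝ) ((fun q => mopStar A lam q - mopStar A lam p) '' {q | p < q}) with hT
  have hTfin : T.Finite := Set.Finite.insert _ ((Set.toFinite _).image _)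
  have hTne : T.Nonempty := ⟨1, Set.mem_insert _ _⟩
  set ε := sInf T with hε
  have hεpos : 0 < ε := by
    have hmem := Set.Nonempty.csInf_mem hTne hTfin
    rcases hmem with h1 | ⟨q, hq, heq⟩
    · rw [hε, hT] at *; rw [h1]; norm_num
    · have := mopStar_strictMono hmin hmax hlam hq (Or.inl hp)
      rw [hε]; rw [← heq]; dsimp only; linarith
  have hεle : ∀ q, p < q → ε ≤ mopStar A lam q - mopStar A lam p := fun q hq =>
    csInf_le hTfin.bddBelow (Set.mem_insert_of_mem _ ⟨q, hq, rfl⟩)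
  refine ⟨ε, hεpos, ?_, ?_⟩
  · intro x y hxy
    simp only [Pi.add_apply, Pi.smul_apply, smul_eq_mul, Pi.single_apply]
    by_cases hx : x = p <;> by_cases hy : y = p
    · rw [if_pos hx, if_pos hy, hx, hy]
    · rw [if_pos hx, if_neg hy, mul_one, mul_zero, add_zero, hx]
      have hlt : p < y := lt_of_le_of_ne (hx.symm.le.trans hxy) (Ne.symm hy)
      have := hεle y hlt
      linarith
    · rw [if_neg hx, if_pos hy, mul_zero, mul_one, add_zero, hy]
      have h2 : mopStar A lam x ≤ mopStar A lam p := by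
        have := mopStar_mono hmin hmax hlam hxy
        rwa [hy] at this
      linarith
    · rw [if_neg hx, if_neg hy]
      simpa using mopStar_mono hmin hmax hlam hxy
  · intro a ha
    have hap : a ≠ p := fun h => (not_mem_A_of_free hp) (h ▸ ha)
    simp only [Pi.add_apply, Pi.smul_apply, smul_eq_mul, Pi.single_eq_of_ne hap, mul_zero,
      add_zero]
    exact (mopStar_mem hmin hmax hlam).2 a ha

end perturb

/-- the marked order polytope is a compact convex polytope (a bounded
intersection of finitely many closed affine halfspaces) whose dimension is
`|P \ {p : ∃ a,b ∈ A, a ≤ p ≤ b, λ(a) = λ(b)}|`. -/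
theorem stmt0 (P : Type*) [Fintype P] [PartialOrder P] (A : Set P)
    (hmin : ∀ p : P, IsMin p → p ∈ A) (hmax : ∀ p : P, IsMax p → p ∈ A)
    (lam : P → ℝ) (hlam : ∀ a ∈ A, ∀ b ∈ A, a ≤ b → lam a ≤ lam b) :
    IsCompact (markedOrderPolytope P A lam) ∧
    Convex ℝ (markedOrderPolytope P A lam) ∧
    (∃ (N : ℕ) (f : Fin N → ((P → ℝ) →ₗ[ℝ] ℝ)) (c : Fin N → ℝ),
      markedOrderPolytope P A lam = ⋂ i, {x | f i x ≤ c i}) ∧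
    Module.finrank ℝ (affineSpan ℝ (markedOrderPolytope P A lam)).direction =
      Set.ncard {p : P | ¬ ∃ a ∈ A, ∃ b ∈ A, a ≤ p ∧ p ≤ b ∧ lam a = lam b} := by
  classical
  -- halfspace representation
  set I := ({pq : P × P // pq.1 ≤ pq.2}) ⊕ (↥A ⊕ ↥A) with hI
  set F : I → ((P → ℝ) →ₗ[ℝ] ℝ) := fun i =>
    match i with
    | .inl pq => (LinearMap.proj pq.1.1 : (P → ℝ) →ₗ[ℝ] ℝ) - LinearMap.proj pq.1.2
    | .inr (.inl a) => (LinearMap.proj a.1 : (P → ℝ) →ₗ[ℝ] ℝ)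
    | .inr (.inr a) => -(LinearMap.proj a.1 : (P → ℝ) →ₗ[ℝ] ℝ) with hF
  set C : I → ℝ := fun i =>
    match i with
    | .inl _ => 0
    | .inr (.inl a) => lam a.1
    | .inr (.inr a) => -lam a.1 with hC
  have hrep : markedOrderPolytope P A lam = ⋂ i, {x | F i x ≤ C i} := by
    ext φ
    simp only [Set.mem_iInter, markedOrderPolytope, Set.mem_setOf_eq]
    constructor
    · rintro ⟨hmono, hA⟩ i
      match i with
      | .inl pq =>
          simp only [hF, hC, LinearMap.sub_apply, LinearMap.proj_apply, Set.mem_setOf_eq]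
          linarith [hmono pq.2]
      | .inr (.inl a) =>
          simp only [hF, hC, LinearMap.proj_apply, Set.mem_setOf_eq, hA a.1 a.2, le_refl]
      | .inr (.inr a) =>
          simp only [hF, hC, LinearMap.neg_apply, LinearMap.proj_apply, Set.mem_setOf_eq,
            hA a.1 a.2, le_refl]
    · intro h
      constructor
      · intro x y hxy
        have := h (.inl ⟨(x, y), hxy⟩)
        simp only [hF, hC, LinearMap.sub_apply, LinearMap.proj_apply, Set.mem_setOf_eq] at this
        linarith
      · intro a ha
        have h1 := h (.inr (.inl ⟨a, ha⟩))
        have h2 := h (.inr (.inr ⟨a, ha⟩))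
        simp only [hF, hC, LinearMap.proj_apply, LinearMap.neg_apply, Set.mem_setOf_eq] at h1 h2
        linarith
  have hclosed : IsClosed (markedOrderPolytope P A lam) := by
    rw [hrep]
    exact isClosed_iInter fun i =>
      isClosed_le (F i).continuous_of_finiteDimensional continuous_const
  refine ⟨?_, ?_, ?_, ?_⟩
  · -- compactness
    refine IsCompact.of_isClosed_subset (isCompact_Icc
      (a := mopUp A lam) (b := mopDown A lam)) hclosed ?_
    intro φ hφ
    exact ⟨fun p => mopUp_le hmin hφ p, fun p => le_mopDown hmax hφ p⟩
  · -- convexity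
    intro φ hφ ψ hψ a b ha hb hab
    constructor
    · intro x y hxy
      simp only [Pi.add_apply, Pi.smul_apply, smul_eq_mul]
      have h1 := hφ.1 hxy
      have h2 := hψ.1 hxy
      nlinarith
    · intro c hc
      simp only [Pi.add_apply, Pi.smul_apply, smul_eq_mul, hφ.2 c hc, hψ.2 c hc]
      linear_combination lam c * hab
  · -- halfspaces
    refine ⟨Fintype.card I, F ∘ (Fintype.equivFin I).symm, C ∘ (Fintype.equivFin I).symm, ?_⟩
    rw [hrep]
    exact ((Fintype.equivFin I).symm.surjective.iInter_comp
      (fun i => {x | F i x ≤ C i})).symm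
  · -- dimension
    have hsetfree : {p : P | ¬ ∃ a ∈ A, ∃ b ∈ A, a ≤ p ∧ p ≤ b ∧ lam a = lam b}
        = (mopFixed A lam)ᶜ := rfl
    rw [hsetfree]
    set g : ↥(mopFixed A lam)ᶜ → (P → ℝ) := fun p => Pi.single p.1 (1:ℝ) with hg
    have hgind : LinearIndependent ℝ g := by
      have := (Pi.basisFun ℝ P).linearIndependent
      have h2 : g = (Pi.basisFun ℝ P) ∘ (Subtype.val : ↥(mopFixed A lam)ᶜ → P) := by
        funext p
        simp [hg, Pi.basisFun_apply]
      rw [h2]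
      exact this.comp _ Subtype.val_injective
    have hspan : (affineSpan ℝ (markedOrderPolytope P A lam)).direction
        = Submodule.span ℝ (Set.range g) := by
      rw [direction_affineSpan]
      apply le_antisymm
      · rw [vectorSpan_def, Submodule.span_le]
        rintro v ⟨φ, hφ, ψ, hψ, rfl⟩
        have hv : ∀ q ∈ mopFixed A lam, (φ - ψ) q = 0 := by
          intro q hq
          simp only [Pi.sub_apply, fixed_phi_eq hmin hmax hφ hq, fixed_phi_eq hmin hmax hψ hq,
            sub_self]
        have hsum : (φ - ψ : P → ℝ) = ∑ q : P, (φ - ψ) q • (Pi.single q (1:ℝ) : P → ℝ) := by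
          funext x
          simp [Pi.single_apply, Finset.sum_ite_eq', mul_comm]
        show (φ - ψ : P → ℝ) ∈ (Submodule.span ℝ (Set.range g) : Set (P → ℝ))
        rw [SetLike.mem_coe, hsum]
        refine Submodule.sum_mem _ fun q _ => ?_
        by_cases hq : q ∈ mopFixed A lam
        · rw [hv q hq, zero_smul]; exact Submodule.zero_mem _
        · exact Submodule.smul_mem _ _ (Submodule.subset_span ⟨⟨q, hq⟩, rfl⟩)
      · rw [Submodule.span_le]
        rintro _ ⟨⟨q, hq⟩, rfl⟩
        obtain ⟨ε, hε, hmem⟩ := mopStar_perturb hmin hmax hlam hq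
        have hstar := mopStar_mem hmin hmax hlam
        have hd : (mopStar A lam + ε • (Pi.single q (1:ℝ) : P → ℝ)) -ᵥ mopStar A lam
            ∈ vectorSpan ℝ (markedOrderPolytope P A lam) :=
          vsub_mem_vectorSpan ℝ hmem hstar
        have heq : (mopStar A lam + ε • (Pi.single q (1:ℝ) : P → ℝ)) -ᵥ mopStar A lam
            = ε • (Pi.single q (1:ℝ) : P → ℝ) := by
          simp [vsub_eq_sub]
        rw [heq] at hd
        have : g ⟨q, hq⟩ = ε⁻¹ • (ε • (Pi.single q (1:ℝ) : P → ℝ)) := by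
          rw [smul_smul, inv_mul_cancel₀ hε.ne', one_smul]
        rw [SetLike.mem_coe, this]
        exact Submodule.smul_mem _ _ hd
    rw [hspan, finrank_span_eq_card hgind]
    rw [← Nat.card_coe_set_eq, Nat.card_eq_fintype_card]
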